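/- Let φ₀ ∈ (−π, π) and φ₁ = −φ₀, so that δ = φ₁ − φ₀ = −2φ₀, and let g(A) = Y(2A, δ−A, φ₀). Then g(0) = 0, and g(A) ≠ 0 for every A with 0 < |A| < 2π. In other words, A = 0 is the unique solution of g(A) = 0 in the interval (−2π, 2π). -/

import Mathlib

open Real

/-- `Y a b c = ∫₀¹ sin(a τ²/2 + b τ + c) dτ` -/
noncomputable def Y (a b c : ℝ) : ℝ := ∫ τ in (0:ℝ)..1, Real.sin (a * τ ^ 2 / 2 + b * τ + c)

lemma Y_neg (a b c : ℝ) : Y (-a) (-b) (-c) = - Y a b c := by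
  unfold Y
  rw [← intervalIntegral.integral_neg]
  apply intervalIntegral.integral_congr
  intro τ _
  dsimp only
  rw [show -a * τ ^ 2 / 2 + -b * τ + -c = -(a * τ ^ 2 / 2 + b * τ + c) by ring, Real.sin_neg]

lemma Y_sym (A φ₀ : ℝ) : Y (2*A) (-2*φ₀-A) φ₀
    = 2 * ∫ τ in (0:ℝ)..(1/2:ℝ), Real.sin (A*τ*(τ-1)) * Real.cos (φ₀*(1-2*τ)) := by
  have hc : Continuous fun τ : ℝ => Real.sin (2*A * τ ^ 2 / 2 + (-2*φ₀-A) * τ + φ₀) := by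
    fun_prop
  unfold Y
  rw [← intervalIntegral.integral_add_adjacent_intervals (b := (1/2:ℝ))
    (hc.intervalIntegrable _ _) (hc.intervalIntegrable _ _)]
  have hflip : (∫ τ in (1/2:ℝ)..1, Real.sin (2*A * τ ^ 2 / 2 + (-2*φ₀-A) * τ + φ₀))
      = ∫ τ in (0:ℝ)..(1/2:ℝ), Real.sin (2*A * (1-τ) ^ 2 / 2 + (-2*φ₀-A) * (1-τ) + φ₀) := by
    rw [intervalIntegral.integral_comp_sub_left
      (fun τ => Real.sin (2*A * τ ^ 2 / 2 + (-2*φ₀-A) * τ + φ₀)) 1]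
    norm_num
  have hadd := intervalIntegral.integral_add
    (f := fun τ : ℝ => Real.sin (2*A * τ ^ 2 / 2 + (-2*φ₀-A) * τ + φ₀))
    (g := fun τ : ℝ => Real.sin (2*A * (1-τ) ^ 2 / 2 + (-2*φ₀-A) * (1-τ) + φ₀))
    (μ := MeasureTheory.volume) (a := 0) (b := 1/2)
    (by apply Continuous.intervalIntegrable; fun_prop)
    (by apply Continuous.intervalIntegrable; fun_prop)
  rw [hflip, ← hadd, ← intervalIntegral.integral_const_mul]
  apply intervalIntegral.integral_congr
  intro τ _
  dsimp only
  have e1 : 2*A * τ ^ 2 / 2 + (-2*φ₀-A) * τ + φ₀ = A*τ*(τ-1) + φ₀*(1-2*τ) := by ring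
  have e2 : 2*A * (1-τ) ^ 2 / 2 + (-2*φ₀-A) * (1-τ) + φ₀ = A*τ*(τ-1) - φ₀*(1-2*τ) := by ring
  rw [e1, e2, Real.sin_add, Real.sin_sub]
  ring

lemma inner1 (A τ : ℝ) : HasDerivAt (fun τ : ℝ => A*τ*(τ-1)) (A*(2*τ-1)) τ := by
  have h := ((hasDerivAt_id τ).mul ((hasDerivAt_id τ).sub_const 1)).const_mul A
  simp only [id_eq, mul_one, one_mul] at h
  have : A*(2*τ-1) = A * (τ - 1 + τ) := by ring
  rw [this]
  refine h.congr_of_eventuallyEq (Filter.Eventually.of_forall fun x => ?_)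
  simp only [Pi.mul_apply, id_eq]
  ring

lemma inner2 (φ₀ τ : ℝ) : HasDerivAt (fun τ : ℝ => φ₀*(1-2*τ)) (φ₀*(-2)) τ := by
  have h := (((hasDerivAt_id τ).const_mul (2:ℝ)).const_sub 1).const_mul φ₀
  simpa using h

lemma key_pos (φ₀ : ℝ) (h0 : -π < φ₀) (h1 : φ₀ < π) (A : ℝ) (hA : 0 < A) (hA2 : A < 2*π) :
    Y (2*A) (-2*φ₀-A) φ₀ < 0 := by
  rw [Y_sym]
  have hcos : ∀ τ ∈ Set.Ioo (0:ℝ) (1/2:ℝ), 0 < Real.cos (A*τ*(τ-1)) := by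
    intro τ ⟨ht0, ht1⟩
    have hneg : A*τ*(τ-1) < 0 := by nlinarith [mul_pos (mul_pos hA ht0) (show (0:ℝ) < 1 - τ by linarith)]
    apply Real.cos_pos_of_mem_Ioo
    constructor
    · have h4 : τ * (1 - τ) < 1/4 := by nlinarith
      have : A * (τ * (1-τ)) < (2*π) * (1/4) :=
        mul_lt_mul'' hA2 h4 hA.le (by nlinarith)
      nlinarith
    · nlinarith [Real.pi_pos]
  rcases eq_or_ne φ₀ 0 with rfl | hφ
  · have : (0:ℝ) < ∫ τ in (0:ℝ)..(1/2:ℝ), -(Real.sin (A*τ*(τ-1)) * Real.cos ((0:ℝ)*(1-2*τ))) := by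
      apply intervalIntegral.intervalIntegral_pos_of_pos_on
      · apply Continuous.intervalIntegrable; fun_prop
      · intro τ ⟨ht0, ht1⟩
        simp only [zero_mul, Real.cos_zero, mul_one, neg_pos]
        apply Real.sin_neg_of_neg_of_neg_pi_lt
        · nlinarith [mul_pos (mul_pos hA ht0) (show (0:ℝ) < 1 - τ by linarith)]
        · have h4 : τ * (1 - τ) < 1/4 := by nlinarith
          have : A * (τ * (1-τ)) < (2*π) * (1/4) :=
            mul_lt_mul'' hA2 h4 hA.le (by nlinarith)
          nlinarith [Real.pi_pos]
      · norm_num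
    rw [intervalIntegral.integral_neg] at this
    linarith
  · set u : ℝ → ℝ := fun τ => Real.sin (A*τ*(τ-1)) with hu_def
    set u' : ℝ → ℝ := fun τ => Real.cos (A*τ*(τ-1)) * (A*(2*τ-1)) with hu'_def
    set v : ℝ → ℝ := fun τ => -(Real.sin (φ₀*(1-2*τ)) / (2*φ₀)) with hv_def
    set v' : ℝ → ℝ := fun τ => Real.cos (φ₀*(1-2*τ)) with hv'_def
    have hq : (φ₀*(-2))/(2*φ₀) = -1 := by field_simp
    have hu : ∀ τ ∈ Set.uIcc (0:ℝ) (1/2:ℝ), HasDerivAt u (u' τ) τ := by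
      intro τ _
      exact (Real.hasDerivAt_sin _).comp τ (inner1 A τ)
    have hv : ∀ τ ∈ Set.uIcc (0:ℝ) (1/2:ℝ), HasDerivAt v (v' τ) τ := by
      intro τ _
      have h := (((Real.hasDerivAt_sin _).comp τ (inner2 φ₀ τ)).div_const (2*φ₀)).neg
      refine h.congr_deriv ?_
      rw [hv'_def, mul_div_assoc, hq]
      ring
    have hibp := intervalIntegral.integral_mul_deriv_eq_deriv_mul hu hv
      (by apply Continuous.intervalIntegrable; fun_prop)
      (by apply Continuous.intervalIntegrable; fun_prop)
    have hb : u (1/2) * v (1/2) = 0 := by norm_num [hu_def, hv_def]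
    have ha : u 0 * v 0 = 0 := by simp [hu_def]
    rw [hb, ha] at hibp
    have hpos : (0:ℝ) < ∫ τ in (0:ℝ)..(1/2:ℝ), u' τ * v τ := by
      apply intervalIntegral.intervalIntegral_pos_of_pos_on
      · apply Continuous.intervalIntegrable; fun_prop
      · intro τ ⟨ht0, ht1⟩
        have hc := hcos τ ⟨ht0, ht1⟩
        have hsin : 0 < Real.sin (φ₀*(1-2*τ)) / (2*φ₀) := by
          rcases lt_or_gt_of_ne hφ with hneg | hpos
          · apply div_pos_of_neg_of_neg
            · apply Real.sin_neg_of_neg_of_neg_pi_lt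
              · nlinarith
              · nlinarith
            · linarith
          · apply div_pos
            · apply Real.sin_pos_of_pos_of_lt_pi
              · nlinarith
              · nlinarith
            · linarith
        simp only [hu'_def, hv_def]
        have hlt : Real.cos (A*τ*(τ-1)) * (A*(2*τ-1)) < 0 := by
          apply mul_neg_of_pos_of_neg hc
          nlinarith
        nlinarith
      · norm_num
    have hneg : (∫ τ in (0:ℝ)..(1/2:ℝ), u τ * v' τ) < 0 := by
      rw [hibp]; simp; linarith
    have heq : (∫ τ in (0:ℝ)..(1/2:ℝ), Real.sin (A*τ*(τ-1)) * Real.cos (φ₀*(1-2*τ)))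
        = ∫ τ in (0:ℝ)..(1/2:ℝ), u τ * v' τ := rfl
    rw [heq]
    linarith

theorem stmt10 (φ₀ : ℝ) (h0 : -π < φ₀) (h1 : φ₀ < π) :
    Y (2 * 0) (-2 * φ₀ - 0) φ₀ = 0 ∧
    ∀ A : ℝ, 0 < |A| → |A| < 2 * π → Y (2 * A) (-2 * φ₀ - A) φ₀ ≠ 0 := by
  constructor
  · rw [Y_sym]
    simp
  · intro A hA1 hA2
    rcases lt_or_gt_of_ne (abs_pos.mp hA1).symm with hpos | hneg
    · rw [abs_of_pos hpos] at hA2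
      exact ne_of_lt (key_pos φ₀ h0 h1 A hpos hA2)
    · rw [abs_of_neg hneg] at hA2
      have hid : Y (2 * A) (-2 * φ₀ - A) φ₀ = - Y (2 * (-A)) (-2 * (-φ₀) - (-A)) (-φ₀) := by
        rw [show (2*A : ℝ) = -(2 * (-A)) by ring, show (-2*φ₀ - A : ℝ) = -(-2 * (-φ₀) - (-A)) by ring,
          show (φ₀ : ℝ) = -(-φ₀) by ring]
        rw [Y_neg]
        ring_nf
      rw [hid]
      have := key_pos (-φ₀) (by linarith) (by linarith) (-A) (by linarith) hA2
      simp only [ne_eq, neg_eq_zero]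
      exact ne_of_lt this
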